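/- Let (k_n) be a sequence of natural numbers with k_n ≡ n (mod 2) and k_n/√n → μ ≥ 0 as n → ∞. Then C(n, (n+k_n)/2) is asymptotically equivalent to √(2/(πn)) · 2^n · exp(−μ²/2), i.e. the ratio of the two sides converges to 1 as n → ∞. -/

import Mathlib

open Filter Real

-- helper lemma trials
private lemma log_one_add_le {x : ℝ} (h0 : 0 ≤ x) : Real.log (1 + x) ≤ x := by
  have := Real.log_le_sub_one_of_pos (show (0:ℝ) < 1 + x by linarith)
  linarith

private lemma le_log_one_add {x : ℝ} (h0 : 0 ≤ x) : x / (1 + x) ≤ Real.log (1 + x) := by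
  have h : (0:ℝ) < 1 + x := by linarith
  have := Real.log_le_sub_one_of_pos (show (0:ℝ) < (1+x)⁻¹ by positivity)
  rw [Real.log_inv] at this
  have h2 : (1+x)⁻¹ - 1 = -(x/(1+x)) := by field_simp; ring
  linarith [h2 ▸ this]

private lemma log_one_sub_le {x : ℝ} (h0 : 0 ≤ x) (h1 : x < 1) : Real.log (1 - x) ≤ -x := by
  have := Real.log_le_sub_one_of_pos (show (0:ℝ) < 1 - x by linarith)
  linarith

private lemma neg_le_log_one_sub {x : ℝ} (h0 : 0 ≤ x) (h1 : x < 1) :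
    -(x / (1 - x)) ≤ Real.log (1 - x) := by
  have h : (0:ℝ) < 1 - x := by linarith
  have := Real.log_le_sub_one_of_pos (show (0:ℝ) < (1-x)⁻¹ by positivity)
  rw [Real.log_inv] at this
  have h2 : (1-x)⁻¹ - 1 = x/(1-x) := by field_simp; ring
  linarith [h2 ▸ this]

private lemma factorial_stirling (m : ℕ) (hm : m ≠ 0) :
    (Nat.factorial m : ℝ) = Stirling.stirlingSeq m * (Real.sqrt (2*m) * ((m:ℝ)/Real.exp 1)^m) := by
  have hm' : (0:ℝ) < m := by exact_mod_cast Nat.pos_of_ne_zero hm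
  have h : Real.sqrt (2*(m:ℝ)) * ((m:ℝ)/Real.exp 1)^m ≠ 0 := by positivity
  rw [Stirling.stirlingSeq, div_mul_cancel₀ _ h]

set_option maxHeartbeats 2000000 in

/-- If `k_n ≡ n (mod 2)` and `k_n/√n → μ ≥ 0`, then
`C(n, (n+k_n)/2) ∼ √(2/(πn)) · 2^n · exp(−μ²/2)`, i.e. the ratio tends to `1`. -/
theorem binomial_asymptotics (μ : ℝ) (hμ : 0 ≤ μ) (k : ℕ → ℕ)
    (hpar : ∀ n, k n % 2 = n % 2)
    (hconv : Tendsto (fun n : ℕ => (k n : ℝ) / Real.sqrt n) atTop (nhds μ)) :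
    Tendsto (fun n : ℕ =>
        (Nat.choose n ((n + k n) / 2) : ℝ)
          / (Real.sqrt (2 / (Real.pi * n)) * 2 ^ n * Real.exp (-μ ^ 2 / 2)))
      atTop (nhds 1) := by

  have hπ : (0:ℝ) < π := Real.pi_pos
  have hsπ : (0:ℝ) < Real.sqrt π := Real.sqrt_pos.mpr hπ
  set t : ℕ → ℝ := fun n => (k n : ℝ) / n with htdef
  have hsqrtn : Tendsto (fun n : ℕ => Real.sqrt n) atTop atTop := by
    apply tendsto_atTop_atTop.2
    intro c
    refine ⟨⌈c⌉₊^2, fun n hn => ?_⟩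
    calc c ≤ ⌈c⌉₊ := Nat.le_ceil c
    _ = √((⌈c⌉₊:ℝ)^2) := by rw [Real.sqrt_sq (by positivity)]
    _ ≤ √ n := Real.sqrt_le_sqrt (by exact_mod_cast hn)
  have hinv : Tendsto (fun n : ℕ => (Real.sqrt n)⁻¹) atTop (nhds 0) :=
    hsqrtn.inv_tendsto_atTop
  -- t → 0
  have ht0 : Tendsto t atTop (nhds 0) := by
    have h := hconv.mul hinv
    rw [mul_zero] at h
    refine h.congr' ?_
    filter_upwards [eventually_ge_atTop 1] with n hn
    have hn' : (0:ℝ) < n := by exact_mod_cast hn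
    have hs : Real.sqrt n * Real.sqrt n = (n:ℝ) := Real.mul_self_sqrt hn'.le
    have hsne : Real.sqrt (n:ℝ) ≠ 0 := by positivity
    simp only [htdef]
    rw [← hs]
    field_simp
    rw [Real.sqrt_sq (Real.sqrt_nonneg _)]
  -- k^2/n → μ^2
  have hk2 : Tendsto (fun n : ℕ => (k n:ℝ)^2 / n) atTop (nhds (μ^2)) := by
    have h := hconv.mul hconv
    rw [show μ * μ = μ^2 by ring] at h
    refine h.congr' ?_
    filter_upwards [eventually_ge_atTop 1] with n hn
    have hn' : (0:ℝ) < n := by exact_mod_cast hn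
    have hs : Real.sqrt n * Real.sqrt n = (n:ℝ) := Real.mul_self_sqrt hn'.le
    rw [div_mul_div_comm, hs, ← sq]
  -- k * t → μ^2
  have hkt : Tendsto (fun n : ℕ => (k n:ℝ) * t n) atTop (nhds (μ^2)) := by
    refine hk2.congr fun n => ?_
    simp only [htdef]
    ring
  -- n * t^2 → μ^2
  have hnt2 : Tendsto (fun n : ℕ => (n:ℝ) * t n^2) atTop (nhds (μ^2)) := by
    refine hk2.congr' ?_
    filter_upwards [eventually_ge_atTop 1] with n hn
    have hn' : (0:ℝ) < n := by exact_mod_cast hn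
    simp only [htdef]
    field_simp
  have ht2 : Tendsto (fun n : ℕ => t n^2) atTop (nhds 0) := by
    simpa using ht0.pow 2
  have h1t2 : Tendsto (fun n : ℕ => 1 - t n^2) atTop (nhds 1) := by
    simpa using tendsto_const_nhds.sub ht2
  have h1pt : Tendsto (fun n : ℕ => 1 + t n) atTop (nhds 1) := by
    simpa using tendsto_const_nhds.add ht0
  have h1mt : Tendsto (fun n : ℕ => 1 - t n) atTop (nhds 1) := by
    simpa using tendsto_const_nhds.sub ht0
  -- eventual bounds on t
  have htnonneg : ∀ n, 0 ≤ t n := fun n => by positivity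
  have hthalf : ∀ᶠ n in atTop, t n ≤ 1/2 := by
    filter_upwards [Tendsto.eventually_lt_const (by norm_num : (0:ℝ) < 1/2) ht0] with n h
    exact h.le
  -- A : n * log(1 - t^2) → -μ^2
  have hA : Tendsto (fun n : ℕ => (n:ℝ) * Real.log (1 - t n^2)) atTop (nhds (-μ^2)) := by
    have hlow : Tendsto (fun n : ℕ => -(((n:ℝ) * t n^2) * (1 - t n^2)⁻¹)) atTop
        (nhds (-μ^2)) := by
      have := (hnt2.mul (h1t2.inv₀ one_ne_zero)).neg
      simpa using this
    have hup : Tendsto (fun n : ℕ => -((n:ℝ) * t n^2)) atTop (nhds (-μ^2)) := hnt2.neg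
    refine tendsto_of_tendsto_of_tendsto_of_le_of_le' hlow hup ?_ ?_
    · filter_upwards [hthalf] with n hn
      have h0 : 0 ≤ t n ^ 2 := by positivity
      have h1 : t n ^ 2 < 1 := by nlinarith [htnonneg n]
      have := neg_le_log_one_sub h0 h1
      have h2 : (0:ℝ) ≤ (n:ℝ) := Nat.cast_nonneg n
      calc -((n:ℝ) * t n^2 * (1 - t n^2)⁻¹) = (n:ℝ) * -(t n^2 / (1 - t n^2)) := by ring
      _ ≤ (n:ℝ) * Real.log (1 - t n^2) := mul_le_mul_of_nonneg_left this h2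
    · filter_upwards [hthalf] with n hn
      have h0 : 0 ≤ t n ^ 2 := by positivity
      have h1 : t n ^ 2 < 1 := by nlinarith [htnonneg n]
      have := log_one_sub_le h0 h1
      have h2 : (0:ℝ) ≤ (n:ℝ) := Nat.cast_nonneg n
      calc (n:ℝ) * Real.log (1 - t n^2) ≤ (n:ℝ) * -(t n^2) := mul_le_mul_of_nonneg_left this h2
      _ = -((n:ℝ) * t n^2) := by ring
  -- B1 : k * log(1+t) → μ^2
  have hB1 : Tendsto (fun n : ℕ => (k n:ℝ) * Real.log (1 + t n)) atTop (nhds (μ^2)) := by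
    have hlow : Tendsto (fun n : ℕ => ((k n:ℝ) * t n) * (1 + t n)⁻¹) atTop (nhds (μ^2)) := by
      have := hkt.mul (h1pt.inv₀ one_ne_zero)
      simpa using this
    refine tendsto_of_tendsto_of_tendsto_of_le_of_le' hlow hkt ?_ ?_
    · filter_upwards with n
      have h0 := htnonneg n
      have h2 : (0:ℝ) ≤ (k n:ℝ) := Nat.cast_nonneg _
      have := le_log_one_add h0
      calc (k n:ℝ) * t n * (1 + t n)⁻¹ = (k n:ℝ) * (t n / (1 + t n)) := by ring
      _ ≤ (k n:ℝ) * Real.log (1 + t n) := mul_le_mul_of_nonneg_left this h2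
    · filter_upwards with n
      exact mul_le_mul_of_nonneg_left (log_one_add_le (htnonneg n)) (Nat.cast_nonneg _)
  -- B2 : k * (-log(1-t)) → μ^2
  have hB2 : Tendsto (fun n : ℕ => (k n:ℝ) * (-Real.log (1 - t n))) atTop (nhds (μ^2)) := by
    have hup : Tendsto (fun n : ℕ => ((k n:ℝ) * t n) * (1 - t n)⁻¹) atTop (nhds (μ^2)) := by
      have := hkt.mul (h1mt.inv₀ one_ne_zero)
      simpa using this
    refine tendsto_of_tendsto_of_tendsto_of_le_of_le' hkt hup ?_ ?_
    · filter_upwards [hthalf] with n hn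
      have h0 := htnonneg n
      have h1 : t n < 1 := by linarith
      have h2 : (0:ℝ) ≤ (k n:ℝ) := Nat.cast_nonneg _
      have := log_one_sub_le h0 h1
      calc (k n:ℝ) * t n = (k n:ℝ) * t n := rfl
      _ ≤ (k n:ℝ) * (-Real.log (1 - t n)) := mul_le_mul_of_nonneg_left (by linarith) h2
    · filter_upwards [hthalf] with n hn
      have h0 := htnonneg n
      have h1 : t n < 1 := by linarith
      have h2 : (0:ℝ) ≤ (k n:ℝ) := Nat.cast_nonneg _
      have := neg_le_log_one_sub h0 h1
      calc (k n:ℝ) * (-Real.log (1 - t n)) ≤ (k n:ℝ) * (t n / (1 - t n)) :=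
        mul_le_mul_of_nonneg_left (by linarith) h2
      _ = (k n:ℝ) * t n * (1 - t n)⁻¹ := by ring
  -- L → μ^2/2
  set L : ℕ → ℝ := fun n => (n:ℝ)/2 * Real.log (1 - t n^2)
      + (k n:ℝ)/2 * (Real.log (1 + t n) - Real.log (1 - t n)) with hLdef
  have hL : Tendsto L atTop (nhds (μ^2/2)) := by
    have h := (hA.const_mul (1/2)).add ((hB1.add hB2).const_mul (1/2))
    rw [show (1/2) * -μ^2 + (1/2) * (μ^2 + μ^2) = μ^2/2 by ring] at h
    refine h.congr fun n => ?_
    simp only [hLdef]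
    ring
  have hexp : Tendsto (fun n : ℕ => Real.exp (μ^2/2 - L n)) atTop (nhds 1) := by
    have h0 : Tendsto (fun n : ℕ => μ^2/2 - L n) atTop (nhds 0) := by
      have h := hL.const_sub (μ^2/2); rwa [sub_self] at h
    have := (Real.continuous_exp.tendsto 0).comp h0
    simpa [Function.comp_def] using this
  -- nat subsequences to infinity
  have hdiv2 : Tendsto (fun n : ℕ => n / 2) atTop atTop :=
    tendsto_atTop_atTop.2 fun c => ⟨2*c, fun n hn => by omega⟩
  have ha_top : Tendsto (fun n : ℕ => (n + k n) / 2) atTop atTop :=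
    tendsto_atTop_mono (fun n => Nat.div_le_div_right (Nat.le_add_right n (k n))) hdiv2
  have hk4 : ∀ᶠ n in atTop, 4 * k n ≤ n := by
    have h := Tendsto.eventually_lt_const (by norm_num : (0:ℝ) < 1/4) ht0
    filter_upwards [h, eventually_ge_atTop 1] with n hn hn1
    have hn' : (0:ℝ) < n := by exact_mod_cast hn1
    simp only [htdef] at hn
    rw [div_lt_iff₀ hn'] at hn
    have : (4 * k n : ℝ) ≤ (n:ℝ) := by push_cast; nlinarith
    exact_mod_cast this
  have hb_top : Tendsto (fun n : ℕ => (n - k n) / 2) atTop atTop := by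
    have hdiv8 : Tendsto (fun n : ℕ => n / 8) atTop atTop :=
      tendsto_atTop_atTop.2 fun c => ⟨8*c, fun n hn => by omega⟩
    refine tendsto_atTop_mono' atTop ?_ hdiv8
    filter_upwards [hk4] with n hn
    omega
  -- Stirling factors
  have hS := Stirling.tendsto_stirlingSeq_sqrt_pi
  have hSa : Tendsto (fun n : ℕ => Stirling.stirlingSeq ((n + k n) / 2)) atTop (nhds (√π)) :=
    hS.comp ha_top
  have hSb : Tendsto (fun n : ℕ => Stirling.stirlingSeq ((n - k n) / 2)) atTop (nhds (√π)) :=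
    hS.comp hb_top
  have hF1 : Tendsto (fun n : ℕ => Stirling.stirlingSeq n /
      (Stirling.stirlingSeq ((n + k n) / 2) * Stirling.stirlingSeq ((n - k n) / 2)))
      atTop (nhds (√π / (√π * √π))) :=
    hS.div (hSa.mul hSb) (by positivity)
  -- F2
  have hF2 : Tendsto (fun n : ℕ => Real.sqrt (π * (n:ℝ)^2 / ((n:ℝ)^2 - (k n:ℝ)^2)))
      atTop (nhds (√π)) := by
    have hinner : Tendsto (fun n : ℕ => π * (n:ℝ)^2 / ((n:ℝ)^2 - (k n:ℝ)^2))
        atTop (nhds π) := by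
      have h := tendsto_const_nhds (x := π) (f := atTop (α := ℕ)) |>.div h1t2 one_ne_zero
      rw [div_one] at h
      refine h.congr' ?_
      filter_upwards [eventually_ge_atTop 1, hthalf] with n hn hn2
      have hn' : (0:ℝ) < n := by exact_mod_cast hn
      have h1 : 1 - t n ^ 2 ≠ 0 := by nlinarith [htnonneg n]
      simp only [htdef, Pi.div_apply] at h1 ⊢
      field_simp
    have hcont : Tendsto Real.sqrt (nhds π) (nhds (√π)) :=
      Real.continuous_sqrt.continuousAt
    exact hcont.comp hinner
  -- main product limit
  have hMain : Tendsto (fun n : ℕ =>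
      (Stirling.stirlingSeq n /
        (Stirling.stirlingSeq ((n + k n) / 2) * Stirling.stirlingSeq ((n - k n) / 2)))
      * Real.sqrt (π * (n:ℝ)^2 / ((n:ℝ)^2 - (k n:ℝ)^2))
      * Real.exp (μ^2/2 - L n)) atTop (nhds 1) := by
    have h := (hF1.mul hF2).mul hexp
    have hval : √π / (√π * √π) * √π * 1 = 1 := by
      rw [mul_one, div_mul_eq_mul_div, div_eq_one_iff_eq (by positivity)]
    rwa [hval] at h
  -- the eventual equality (final algebra), stated as its own goal for now
  have hfinal : ∀ᶠ n in atTop,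
      (Stirling.stirlingSeq n /
        (Stirling.stirlingSeq ((n + k n) / 2) * Stirling.stirlingSeq ((n - k n) / 2)))
      * Real.sqrt (π * (n:ℝ)^2 / ((n:ℝ)^2 - (k n:ℝ)^2))
      * Real.exp (μ^2/2 - L n)
      = (Nat.choose n ((n + k n) / 2) : ℝ)
          / (Real.sqrt (2 / (Real.pi * n)) * 2 ^ n * Real.exp (-μ^2/2)) := by
    filter_upwards [hk4, eventually_ge_atTop 4] with n h4k hn4
    have hparn := hpar n
    set K := k n with hKdef
    set A := (n + K) / 2 with hAdef
    set B := (n - K) / 2 with hBdef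
    have h2A : 2 * A = n + K := by omega
    have h2B : 2 * B = n - K := by omega
    have hABn : A + B = n := by omega
    have hAn : A ≤ n := by omega
    have hA1 : 1 ≤ A := by omega
    have hB1 : 1 ≤ B := by omega
    have hKn : K ≤ n := by omega
    -- real versions
    have hrn : (0:ℝ) < n := by exact_mod_cast (by omega : 0 < n)
    have hrA : (0:ℝ) < A := by exact_mod_cast hA1
    have hrB : (0:ℝ) < B := by exact_mod_cast hB1
    have hrK : (0:ℝ) ≤ K := Nat.cast_nonneg K
    have hr2A : 2 * (A:ℝ) = (n:ℝ) + K := by exact_mod_cast h2A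
    have hr2B : 2 * (B:ℝ) = (n:ℝ) - K := by
      have h := congrArg (Nat.cast : ℕ → ℝ) h2B
      rw [Nat.cast_sub hKn] at h
      push_cast at h
      linarith
    have hrKn : (K:ℝ) < (n:ℝ) := by linarith
    have htv : t n = (K:ℝ)/n := by simp only [htdef, hKdef]
    have hp : (0:ℝ) < 1 + t n := by rw [htv]; positivity
    have hm : (0:ℝ) < 1 - t n := by
      rw [htv]
      have : (K:ℝ)/n < 1 := (div_lt_one hrn).mpr hrKn
      linarith
    have h1pt : 1 + t n = 2*(A:ℝ)/n := by rw [htv, hr2A]; field_simp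
    have h1mt : 1 - t n = 2*(B:ℝ)/n := by rw [htv, hr2B]; field_simp
    have hlogp : Real.log (1 + t n) = Real.log 2 + Real.log A - Real.log n := by
      rw [h1pt, Real.log_div (by positivity) hrn.ne', Real.log_mul two_ne_zero hrA.ne']
    have hlogm : Real.log (1 - t n) = Real.log 2 + Real.log B - Real.log n := by
      rw [h1mt, Real.log_div (by positivity) hrn.ne', Real.log_mul two_ne_zero hrB.ne']
    have hlog2 : Real.log (1 - t n^2) = Real.log (1 + t n) + Real.log (1 - t n) := by
      rw [show 1 - t n^2 = (1 + t n)*(1 - t n) by ring, Real.log_mul hp.ne' hm.ne']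
    -- exp identity
    have hpowexp : ∀ (x:ℝ) (m:ℕ), 0 < x → x ^ m = Real.exp (m * Real.log x) := by
      intro x m hx
      rw [← Real.log_pow, Real.exp_log (pow_pos hx m)]
    have hE2 : (n:ℝ)^n / ((A:ℝ)^A * (B:ℝ)^B * 2^n) = Real.exp (-(L n)) := by
      rw [hpowexp _ n hrn, hpowexp _ A hrA, hpowexp _ B hrB,
        hpowexp 2 n two_pos, ← Real.exp_add, ← Real.exp_add, ← Real.exp_sub]
      congr 1
      simp only [hLdef]
      rw [hlog2, hlogp, hlogm]
      linear_combination (-(Real.log (A:ℝ))/2) * hr2A + (-(Real.log (B:ℝ))/2) * hr2B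
    -- sqrt identity
    have hE3 : Real.sqrt (π * (n:ℝ)^2 / ((n:ℝ)^2 - (K:ℝ)^2))
        = Real.sqrt (2*(n:ℝ)) / (Real.sqrt (2*(A:ℝ)) * Real.sqrt (2*(B:ℝ)))
          / Real.sqrt (2 / (π * n)) := by
      have h4 : (2*(A:ℝ)) * (2*(B:ℝ)) = (n:ℝ)^2 - (K:ℝ)^2 := by
        rw [hr2A, hr2B]; ring
      have hsub : (0:ℝ) < (n:ℝ)^2 - (K:ℝ)^2 := by rw [← h4]; positivity
      rw [← Real.sqrt_mul (by positivity) (2*(B:ℝ)), h4]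
      rw [show (2 / (π * (n:ℝ))) = (π * n / 2)⁻¹ by field_simp, Real.sqrt_inv, div_eq_mul_inv _ (√(π * ↑n / 2))⁻¹, inv_inv]
      rw [div_mul_eq_mul_div, ← Real.sqrt_mul (by positivity : (0:ℝ) ≤ 2*(n:ℝ)) (π * n / 2)]
      rw [show 2*(n:ℝ) * (π * n / 2) = π * (n:ℝ)^2 by ring]
      rw [Real.sqrt_div' _ hsub.le]
    -- choose identity
    have hch : (Nat.choose n A : ℝ) = (Nat.factorial n : ℝ)
        / ((Nat.factorial A : ℝ) * (Nat.factorial B : ℝ)) := by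
      have h := Nat.choose_mul_factorial_mul_factorial hAn
      rw [show n - A = B by omega] at h
      have hfA : (0:ℝ) < (Nat.factorial A : ℝ) := by exact_mod_cast Nat.factorial_pos A
      have hfB : (0:ℝ) < (Nat.factorial B : ℝ) := by exact_mod_cast Nat.factorial_pos B
      rw [eq_div_iff (by positivity), ← mul_assoc]
      exact_mod_cast congrArg (Nat.cast : ℕ → ℝ) h
    -- P-identity
    have he1 : Real.exp 1 ^ A * Real.exp 1 ^ B = Real.exp 1 ^ n := by rw [← pow_add, hABn]
    have hPn : ((n:ℝ)/Real.exp 1)^n / (((A:ℝ)/Real.exp 1)^A * ((B:ℝ)/Real.exp 1)^B)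
        = (n:ℝ)^n / ((A:ℝ)^A * (B:ℝ)^B) := by
      rw [div_pow, div_pow, div_pow, div_mul_div_comm, he1]
      rw [div_div_div_cancel_right₀]
      exact pow_ne_zero n (Real.exp_ne_zero 1)
    -- stirling positivity
    have hsn : 0 < Stirling.stirlingSeq n := by
      rw [show n = (n-1)+1 by omega]; exact Stirling.stirlingSeq'_pos _
    have hsA : 0 < Stirling.stirlingSeq A := by
      rw [show A = (A-1)+1 by omega]; exact Stirling.stirlingSeq'_pos _
    have hsB : 0 < Stirling.stirlingSeq B := by
      rw [show B = (B-1)+1 by omega]; exact Stirling.stirlingSeq'_pos _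
    have hexpid : Real.exp (μ^2/2 - L n)
        = (((n:ℝ)/Real.exp 1)^n / (((A:ℝ)/Real.exp 1)^A * ((B:ℝ)/Real.exp 1)^B))
          / ((2:ℝ)^n * Real.exp (-μ^2/2)) := by
      rw [hPn, show μ^2/2 - L n = -L n - (-μ^2/2) by ring, Real.exp_sub, ← hE2,
        div_div, div_div, mul_assoc]
    rw [hch, factorial_stirling n (by omega), factorial_stirling A (by omega),
      factorial_stirling B (by omega), hE3, hexpid]
    have h1 : Real.sqrt (2*(A:ℝ)) ≠ 0 := by positivity
    have h2 : Real.sqrt (2*(B:ℝ)) ≠ 0 := by positivity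
    have h3 : Real.sqrt (2 / (π * (n:ℝ))) ≠ 0 := by positivity
    have h4' : ((A:ℝ)/Real.exp 1)^A ≠ 0 := by positivity
    have h5 : ((B:ℝ)/Real.exp 1)^B ≠ 0 := by positivity
    have h6 : ((2:ℝ))^n ≠ 0 := by positivity
    have h7 : Real.exp (-μ^2/2) ≠ 0 := Real.exp_ne_zero _
    field_simp
  exact hMain.congr' hfinal
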